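/- Let ρ be a density operator on a finite-dimensional complex Hilbert space and let Π₁, Π₂ be orthogonal projections on the same space. Then Tr[Π₁ρ] ≤ (√(Tr[Π₂ρ]) + √(Tr[Π₁(I − Π₂)ρ(I − Π₂)]))². -/

import Mathlib

open Filter Matrix
open scoped Classical ComplexOrder

noncomputable section

section Defs

variable {ι : Type*} [Fintype ι] [DecidableEq ι]

/-- A density operator: a positive semidefinite operator with unit trace. -/
def IsDensityOp (A : Matrix ι ι ℂ) : Prop := A.PosSemidef ∧ A.trace = 1

/-- A test (POVM element): an operator `T` with `0 ≤ T ≤ I`. -/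
def IsTest (T : Matrix ι ι ℂ) : Prop :=
  T.PosSemidef ∧ ((1 : Matrix ι ι ℂ) - T).PosSemidef

/-- An orthogonal projection: a Hermitian idempotent operator. -/
def IsOrthProj (P : Matrix ι ι ℂ) : Prop := P.IsHermitian ∧ P * P = P

/-- The orthogonal projection `{X ≥ 0}` onto the direct sum of eigenspaces of a Hermitian `X`
with nonnegative eigenvalues (junk value `0` if `X` is not Hermitian). -/
def nnProj (X : Matrix ι ι ℂ) : Matrix ι ι ℂ :=
  if hX : X.IsHermitian then
    (hX.eigenvectorUnitary : Matrix ι ι ℂ) *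
      (Matrix.diagonal fun i => if 0 ≤ hX.eigenvalues i then (1 : ℂ) else 0) *
      star (hX.eigenvectorUnitary : Matrix ι ι ℂ)
  else 0

/-- The type-I error `Tr[(I - {ρ - μ σ ≥ 0}) ρ]` of the spectral test. -/
def specErr (ρ σ : Matrix ι ι ℂ) (μ : ℝ) : ℝ :=
  (((1 : Matrix ι ι ℂ) - nnProj (ρ - (μ : ℂ) • σ)) * ρ).trace.re

/-- Optimal ε-achievable type-II error `β_ε(ρ‖S)` against a set `S` of states. -/
def betaSet (ε : ℝ) (ρ : Matrix ι ι ℂ) (S : Set (Matrix ι ι ℂ)) : ℝ :=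
  sInf {x : ℝ | ∃ T : Matrix ι ι ℂ, IsTest T ∧
    (((1 : Matrix ι ι ℂ) - T) * ρ).trace.re ≤ ε ∧
    x = sSup {y : ℝ | ∃ σ ∈ S, y = (T * σ).trace.re}}

/-- `log` of a Hermitian matrix via the functional calculus (with `Real.log 0 = 0`
on the kernel); junk value `0` if not Hermitian. -/
def hermLog (X : Matrix ι ι ℂ) : Matrix ι ι ℂ :=
  if hX : X.IsHermitian then
    (hX.eigenvectorUnitary : Matrix ι ι ℂ) *
      (Matrix.diagonal fun i => (Real.log (hX.eigenvalues i) : ℂ)) *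
      star (hX.eigenvectorUnitary : Matrix ι ι ℂ)
  else 0

/-- Support inclusion `supp ρ ⊆ supp σ`, expressed as kernel inclusion `ker σ ⊆ ker ρ`. -/
def SuppLE (ρ σ : Matrix ι ι ℂ) : Prop :=
  ∀ v : ι → ℂ, σ.mulVec v = 0 → ρ.mulVec v = 0

/-- Umegaki quantum relative entropy `D(ρ‖σ) = Tr[ρ(log ρ - log σ)]` if `supp ρ ⊆ supp σ`,
and `+∞` otherwise. -/
def relEnt (ρ σ : Matrix ι ι ℂ) : EReal :=
  if SuppLE ρ σ then (((ρ * (hermLog ρ - hermLog σ)).trace.re : ℝ) : EReal) else ⊤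

/-- The spectral projection of a Hermitian matrix onto the eigenspace of eigenvalue `μ`. -/
def eigProjAt (X : Matrix ι ι ℂ) (μ : ℝ) : Matrix ι ι ℂ :=
  if hX : X.IsHermitian then
    (hX.eigenvectorUnitary : Matrix ι ι ℂ) *
      (Matrix.diagonal fun i => if hX.eigenvalues i = μ then (1 : ℂ) else 0) *
      star (hX.eigenvectorUnitary : Matrix ι ι ℂ)
  else 0

/-- The number of distinct eigenvalues of a Hermitian matrix. -/
def distinctEigCount (X : Matrix ι ι ℂ) : ℕ :=
  if hX : X.IsHermitian then (Finset.univ.image hX.eigenvalues).card else 0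

/-- The pinching map with respect to `σ`: `ρ ↦ Σ_μ Π_μ ρ Π_μ` over the distinct
eigenvalues `μ` of `σ`. -/
def pinch (σ ρ : Matrix ι ι ℂ) : Matrix ι ι ℂ :=
  if hσ : σ.IsHermitian then
    ∑ μ ∈ Finset.univ.image hσ.eigenvalues, eigProjAt σ μ * ρ * eigProjAt σ μ
  else ρ

/-- The amplification `id_k ⊗ Φ` of a linear map on operators. -/
def ampl (k : ℕ) (Φ : Matrix ι ι ℂ →ₗ[ℂ] Matrix ι ι ℂ)
    (M : Matrix (Fin k × ι) (Fin k × ι) ℂ) : Matrix (Fin k × ι) (Fin k × ι) ℂ :=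
  Matrix.of fun p q => Φ (Matrix.of fun x y => M (p.1, x) (q.1, y)) p.2 q.2

/-- Complete positivity: every amplification `id_k ⊗ Φ` maps positive semidefinite
operators to positive semidefinite operators. -/
def IsCP (Φ : Matrix ι ι ℂ →ₗ[ℂ] Matrix ι ι ℂ) : Prop :=
  ∀ k : ℕ, ∀ M : Matrix (Fin k × ι) (Fin k × ι) ℂ, M.PosSemidef → (ampl k Φ M).PosSemidef

/-- Trace preservation. -/
def IsTP (Φ : Matrix ι ι ℂ →ₗ[ℂ] Matrix ι ι ℂ) : Prop :=
  ∀ X : Matrix ι ι ℂ, (Φ X).trace = X.trace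

end Defs

section SeqDefs

variable {Hn : ℕ → Type*} [∀ n, Fintype (Hn n)] [∀ n, DecidableEq (Hn n)]

/-- The spectral inf-divergence rate `D̲(ε|ρ⃗‖σ⃗)`. -/
def Dlow (ε : ℝ) (ρ σ : (n : ℕ) → Matrix (Hn n) (Hn n) ℂ) : EReal :=
  sSup ((fun a : ℝ => (a : EReal)) ''
    {a : ℝ | Filter.limsup
      (fun n : ℕ => specErr (ρ n) (σ n) (Real.exp (n * a))) Filter.atTop ≤ ε})

/-- The supremum ε-achievable type-II error exponent `B(ε|ρ⃗‖σ⃗)`. -/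
def Bexp (ε : ℝ) (ρ σ : (n : ℕ) → Matrix (Hn n) (Hn n) ℂ) : EReal :=
  sSup {x : EReal | ∃ T : (n : ℕ) → Matrix (Hn n) (Hn n) ℂ,
    (∀ n, IsTest (T n)) ∧
    Filter.limsup
      (fun n : ℕ => (((1 : Matrix (Hn n) (Hn n) ℂ) - T n) * ρ n).trace.re)
      Filter.atTop ≤ ε ∧
    x = Filter.liminf
      (fun n : ℕ => ((↑(-(1 / (n : ℝ)) * Real.log ((T n * σ n).trace.re))) : EReal))
      Filter.atTop}

end SeqDefs

section TensorDefs

variable {H : Type*} [Fintype H] [DecidableEq H]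

/-- The IID tensor power `A^{⊗n}`, acting on `H^{⊗n}` modeled with index type `Fin n → H`. -/
def tpow (A : Matrix H H ℂ) (n : ℕ) : Matrix (Fin n → H) (Fin n → H) ℂ :=
  Matrix.of fun x y => ∏ k : Fin n, A (x k) (y k)

/-- Tensor product of operators on `H^{⊗n}` and `H^{⊗m}`, as an operator on `H^{⊗(n+m)}`. -/
def mTensor {n m : ℕ} (A : Matrix (Fin n → H) (Fin n → H) ℂ)
    (B : Matrix (Fin m → H) (Fin m → H) ℂ) :
    Matrix (Fin (n + m) → H) (Fin (n + m) → H) ℂ :=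
  Matrix.of fun x y =>
    A (fun k => x (Fin.castAdd m k)) (fun k => y (Fin.castAdd m k)) *
      B (fun k => x (Fin.natAdd n k)) (fun k => y (Fin.natAdd n k))

end TensorDefs

/-- Classical spectral inf-divergence rate (with vanishing type-I error) for sequences of
(finitely supported) distributions on `ℕ`. -/
def cDlow (ρ σ : ℕ → ℕ → ℝ) : EReal :=
  sSup ((fun a : ℝ => (a : EReal)) ''
    {a : ℝ | Filter.limsup
      (fun n : ℕ => ∑' x : ℕ, if ρ n x < Real.exp (n * a) * σ n x then ρ n x else 0)
      Filter.atTop = 0})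
set_option linter.unusedSectionVars false

section Aux
variable {ι : Type*} [Fintype ι] [DecidableEq ι]

noncomputable def emb (A : Matrix ι ι ℂ) : EuclideanSpace ℂ (ι × ι) :=
  (WithLp.equiv 2 _).symm (fun p => A p.1 p.2)

lemma emb_add (A B : Matrix ι ι ℂ) : emb (A + B) = emb A + emb B := rfl

lemma inner_emb (A B : Matrix ι ι ℂ) : @inner ℂ _ _ (emb A) (emb B) = (Aᴴ * B).trace := by
  simp only [emb, PiLp.inner_apply, WithLp.equiv_symm_apply, PiLp.toLp_apply, RCLike.inner_apply,
    Matrix.trace, Matrix.diag_apply, Matrix.mul_apply, Matrix.conjTranspose_apply,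
    Fintype.sum_prod_type, starRingEnd_apply]
  rw [Finset.sum_comm]
  exact Finset.sum_congr rfl fun _ _ => Finset.sum_congr rfl fun _ _ => mul_comm _ _

lemma trace_re_nonneg {N : Matrix ι ι ℂ} (hN : N.PosSemidef) : 0 ≤ N.trace.re := by
  rw [Matrix.trace, Complex.re_sum]
  apply Finset.sum_nonneg
  intro i _
  have := hN.re_dotProduct_nonneg (Pi.single i 1)
  simpa [dotProduct, Matrix.mulVec, Pi.single_apply] using this

lemma norm_emb_sq (A : Matrix ι ι ℂ) : ‖emb A‖ ^ 2 = (Aᴴ * A).trace.re := by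
  have := @inner_self_eq_norm_sq ℂ _ _ _ _ (emb A)
  rw [← this, inner_emb, RCLike.re_to_complex]

open scoped MatrixOrder in
lemma exists_sqrt_herm {A : Matrix ι ι ℂ} (hA : A.PosSemidef) :
    ∃ s : Matrix ι ι ℂ, s * s = A ∧ sᴴ = s :=
  ⟨CFC.sqrt A, CFC.sqrt_mul_sqrt_self A (nonneg_iff_posSemidef.mpr hA),
    (nonneg_iff_posSemidef.mp (CFC.sqrt_nonneg A)).isHermitian⟩
end Aux

/-- **Cauchy–Schwarz estimate for two projections.** For a density operator `ρ` and
orthogonal projections `P₁, P₂`,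
`Tr[P₁ρ] ≤ (√(Tr[P₂ρ]) + √(Tr[P₁(I−P₂)ρ(I−P₂)]))²`. -/
theorem stmt6 {ι : Type*} [Fintype ι] [DecidableEq ι]
    (ρ P₁ P₂ : Matrix ι ι ℂ) (hρ : IsDensityOp ρ)
    (h1 : IsOrthProj P₁) (h2 : IsOrthProj P₂) :
    (P₁ * ρ).trace.re
      ≤ (Real.sqrt ((P₂ * ρ).trace.re)
          + Real.sqrt ((P₁ * (((1 : Matrix ι ι ℂ) - P₂) * ρ * ((1 : Matrix ι ι ℂ) - P₂))).trace.re)) ^ 2 := by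
  obtain ⟨hρpsd, -⟩ := hρ
  obtain ⟨h1h', h1i⟩ := h1
  obtain ⟨h2h', h2i⟩ := h2
  have h1h : P₁ᴴ = P₁ := h1h'
  have h2h : P₂ᴴ = P₂ := h2h'
  obtain ⟨s, hss, hsh⟩ := exists_sqrt_herm hρpsd
  set Q : Matrix ι ι ℂ := (1 : Matrix ι ι ℂ) - P₂ with hQ_def
  have hQh : Qᴴ = Q := by simp [hQ_def, conjTranspose_sub, h2h]
  -- first identity
  have e1 : (P₁ * ρ).trace.re = ‖emb (P₁ * s)‖ ^ 2 := by
    have key : (P₁ * s)ᴴ * (P₁ * s) = s * (P₁ * s) := by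
      rw [conjTranspose_mul, hsh, h1h, mul_assoc, ← mul_assoc P₁ P₁ s, h1i]
    have t : ((P₁ * s)ᴴ * (P₁ * s)).trace = (P₁ * ρ).trace := by
      rw [key, Matrix.trace_mul_comm s (P₁ * s), mul_assoc, hss]
    rw [norm_emb_sq, t]
  -- third term identity
  have e3 : (P₁ * (Q * ρ * Q)).trace.re = ‖emb (P₁ * (Q * s))‖ ^ 2 := by
    have key : (P₁ * (Q * s))ᴴ * (P₁ * (Q * s)) = (s * Q) * (P₁ * (Q * s)) := by
      rw [conjTranspose_mul, conjTranspose_mul, hsh, hQh, h1h]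
      rw [mul_assoc, mul_assoc, ← mul_assoc P₁ P₁ (Q * s), h1i]
      rw [← mul_assoc s Q]
    have t : ((P₁ * (Q * s))ᴴ * (P₁ * (Q * s))).trace = (P₁ * (Q * ρ * Q)).trace := by
      rw [key, Matrix.trace_mul_comm (s * Q) (P₁ * (Q * s))]
      congr 1
      rw [← hss]
      simp only [mul_assoc]
    rw [norm_emb_sq, t]
  -- second inequality
  have hP1psd : ((1 : Matrix ι ι ℂ) - P₁).PosSemidef := by
    have h : ((1 : Matrix ι ι ℂ) - P₁)ᴴ * ((1 : Matrix ι ι ℂ) - P₁) = (1 : Matrix ι ι ℂ) - P₁ := by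
      rw [conjTranspose_sub, conjTranspose_one, h1h, sub_mul, mul_sub, mul_sub, h1i]
      simp
    rw [← h]
    exact posSemidef_conjTranspose_mul_self _
  have e2 : ‖emb (P₁ * (P₂ * s))‖ ^ 2 ≤ (P₂ * ρ).trace.re := by
    have hpsd : ((P₂ * s)ᴴ * ((1 : Matrix ι ι ℂ) - P₁) * (P₂ * s)).PosSemidef :=
      hP1psd.conjTranspose_mul_mul_same (P₂ * s)
    have hnn := trace_re_nonneg hpsd
    have hAd : (P₁ * (P₂ * s))ᴴ * (P₁ * (P₂ * s)) = (P₂ * s)ᴴ * (P₁ * (P₂ * s)) := by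
      rw [conjTranspose_mul, h1h, mul_assoc, ← mul_assoc P₁ P₁ (P₂ * s), h1i]
    have expand : (P₂ * s)ᴴ * ((1 : Matrix ι ι ℂ) - P₁) * (P₂ * s)
        = (P₂ * s)ᴴ * (P₂ * s) - (P₁ * (P₂ * s))ᴴ * (P₁ * (P₂ * s)) := by
      rw [hAd]
      noncomm_ring
    have tr2 : ((P₂ * s)ᴴ * (P₂ * s)).trace = (P₂ * ρ).trace := by
      have : (P₂ * s)ᴴ * (P₂ * s) = s * (P₂ * s) := by
        rw [conjTranspose_mul, hsh, h2h, mul_assoc, ← mul_assoc P₂ P₂ s, h2i]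
      rw [this, Matrix.trace_mul_comm, mul_assoc, hss]
    rw [norm_emb_sq]
    rw [expand, Matrix.trace_sub, Complex.sub_re, tr2] at hnn
    linarith
  -- splitting
  have split : emb (P₁ * s) = emb (P₁ * (P₂ * s)) + emb (P₁ * (Q * s)) := by
    rw [← emb_add]
    congr 1
    rw [← mul_add, ← add_mul, hQ_def]
    simp
  have hx : ‖emb (P₁ * (P₂ * s))‖ ≤ Real.sqrt ((P₂ * ρ).trace.re) := by
    have := Real.sqrt_le_sqrt e2
    rwa [Real.sqrt_sq (norm_nonneg _)] at this
  have hy : ‖emb (P₁ * (Q * s))‖ = Real.sqrt ((P₁ * (Q * ρ * Q)).trace.re) := by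
    rw [e3, Real.sqrt_sq (norm_nonneg _)]
  calc (P₁ * ρ).trace.re = ‖emb (P₁ * (P₂ * s)) + emb (P₁ * (Q * s))‖ ^ 2 := by rw [e1, split]
    _ ≤ (‖emb (P₁ * (P₂ * s))‖ + ‖emb (P₁ * (Q * s))‖) ^ 2 := by
        apply pow_le_pow_left₀ (norm_nonneg _) (norm_add_le _ _)
    _ ≤ (Real.sqrt ((P₂ * ρ).trace.re)
          + Real.sqrt ((P₁ * (Q * ρ * Q)).trace.re)) ^ 2 := by
        apply pow_le_pow_left₀ (by positivity)
        rw [← hy]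
        exact add_le_add_left hx _
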